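/- Let p be an odd prime and d an integer with p ∤ d such that the Legendre symbol (d/p) equals 1. Then in ℤ[√d][X] one has ∏_{1 ≤ m,n ≤ p−1, p ∣ m²−dn²} (x − (m + n√d)) ≡ x^{p−1}·(x^{p−1} − 1) (mod p), where the product runs over all pairs (m,n) with 1 ≤ m,n ≤ p−1 and p dividing m² − dn². -/
import Mathlib
open Polynomial Finset

lemma prod_univ_X_sub_C (p : ℕ) [Fact p.Prime] :
    (∏ a : ZMod p, (X - C a)) = X ^ p - X := by
  have hp1 : 1 < p := (Fact.out : p.Prime).one_lt
  have hroots : roots (X ^ p - X : (ZMod p)[X]) = Finset.univ.val := by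
    have := FiniteField.roots_X_pow_card_sub_X (ZMod p)
    rwa [ZMod.card] at this
  have hm : (X ^ p - X : (ZMod p)[X]).Monic := by
    apply Polynomial.monic_X_pow_sub
    simpa using hp1
  have hdeg := FiniteField.X_pow_card_sub_X_natDegree_eq (ZMod p) hp1
  have h := Polynomial.prod_multiset_X_sub_C_of_monic_of_roots_card_eq hm
    (by rw [hroots, hdeg]; simpa using (ZMod.card p))
  rw [← h, hroots, Finset.prod_eq_multiset_prod]

lemma prod_erase_X_sub_C (p : ℕ) [Fact p.Prime] :
    (∏ a ∈ (univ : Finset (ZMod p)).erase 0, (X - C a)) = X ^ (p - 1) - 1 := by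
  have hp1 : 1 < p := (Fact.out : p.Prime).one_lt
  have h0 : (univ : Finset (ZMod p)) = insert 0 (univ.erase 0) := by
    rw [Finset.insert_erase (mem_univ 0)]
  have h := prod_univ_X_sub_C p
  rw [h0, Finset.prod_insert (Finset.notMem_erase _ _)] at h
  have hX : (X : (ZMod p)[X]) ≠ 0 := X_ne_zero
  apply mul_left_cancel₀ hX
  rw [C_0, sub_zero] at h
  rw [h, mul_sub, mul_one, ← pow_succ', Nat.sub_add_cancel hp1.le]

lemma zmodTwoNeZero (p : ℕ) [Fact p.Prime] (hodd : Odd p) : (2 : ZMod p) ≠ 0 := by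
  intro h
  have h2' : ((2 : ℕ) : ZMod p) = 0 := by exact_mod_cast h
  rw [ZMod.natCast_eq_zero_iff] at h2'
  have hle := Nat.le_of_dvd two_pos h2'
  have hge := (Fact.out : p.Prime).two_le
  have : p = 2 := le_antisymm hle hge
  rw [this, Nat.odd_iff] at hodd
  omega

lemma prod_T (p : ℕ) [Fact p.Prime] (hodd : Odd p) (d : ℤ) (e : ZMod p)
    (he : e ^ 2 = (d : ZMod p)) (he0 : e ≠ 0) :
    ∏ ab ∈ (((univ : Finset (ZMod p)).erase 0 ×ˢ (univ : Finset (ZMod p)).erase 0).filter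
      fun ab => ab.1 ^ 2 = (d : ZMod p) * ab.2 ^ 2),
      (X - C (ab.1 + ab.2 * e)) = X ^ (p - 1) * (X ^ (p - 1) - 1) := by
  have h2 : (2 : ZMod p) ≠ 0 := zmodTwoNeZero p hodd
  set N := (univ : Finset (ZMod p)).erase 0 with hN
  have hcardN : N.card = p - 1 := by
    rw [hN, Finset.card_erase_of_mem (mem_univ 0), Finset.card_univ, ZMod.card]
  have hTeq : (N ×ˢ N).filter (fun ab => ab.1 ^ 2 = (d : ZMod p) * ab.2 ^ 2)
      = N.image (fun b => (b * e, b)) ∪ N.image (fun b => (-(b * e), b)) := by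
    ext ⟨a, b⟩
    simp only [Finset.mem_filter, Finset.mem_product, Finset.mem_union, Finset.mem_image,
      hN, Finset.mem_erase, Finset.mem_univ, and_true, Prod.mk.injEq]
    constructor
    · rintro ⟨⟨ha, hb⟩, hab⟩
      rw [← he] at hab
      have hz : (a - b * e) * (a + b * e) = 0 := by linear_combination hab
      rcases mul_eq_zero.mp hz with hz | hz
      · exact Or.inl ⟨b, hb, (sub_eq_zero.mp hz).symm, rfl⟩
      · exact Or.inr ⟨b, hb, (neg_eq_of_add_eq_zero_left hz), rfl⟩
    · rintro (⟨b', hb', rfl, rfl⟩ | ⟨b', hb', rfl, rfl⟩)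
      · exact ⟨⟨mul_ne_zero hb' he0, hb'⟩, by rw [← he]; ring⟩
      · exact ⟨⟨by simpa using mul_ne_zero hb' he0, hb'⟩, by rw [← he]; ring⟩
  have hdisj : Disjoint (N.image fun b => (b * e, b)) (N.image fun b => (-(b * e), b)) := by
    rw [Finset.disjoint_left]
    rintro ⟨a, b⟩ h1 h2'
    simp only [Finset.mem_image, hN, Finset.mem_erase, Finset.mem_univ, and_true,
      Prod.mk.injEq] at h1 h2'
    obtain ⟨b1, hb1, hx1, rfl⟩ := h1
    obtain ⟨b2, hb2, hx2, rfl⟩ := h2'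
    rw [← hx2] at hx1
    have h0 : (2 : ZMod p) * (b2 * e) = 0 := by linear_combination hx1
    exact mul_ne_zero h2 (mul_ne_zero hb2 he0) h0
  have hinj1 : Set.InjOn (fun b : ZMod p => (b * e, b)) N := fun x _ y _ h => (Prod.mk.injEq _ _ _ _ ▸ h).2
  have hinj2 : Set.InjOn (fun b : ZMod p => (-(b * e), b)) N := fun x _ y _ h => (Prod.mk.injEq _ _ _ _ ▸ h).2
  rw [hTeq, Finset.prod_union hdisj, Finset.prod_image hinj1, Finset.prod_image hinj2]
  have hee : e + e ≠ 0 := by rw [← two_mul]; exact mul_ne_zero h2 he0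
  have hfirst : (∏ b ∈ N, (X - C (b * e + b * e))) = X ^ (p - 1) - 1 := by
    rw [← prod_erase_X_sub_C p, ← hN]
    apply Finset.prod_nbij' (fun b => b * (e + e)) (fun u => u * (e + e)⁻¹)
    · intro b hb
      simp only [hN, Finset.mem_erase, Finset.mem_univ, and_true] at hb ⊢
      exact mul_ne_zero hb hee
    · intro u hu
      simp only [hN, Finset.mem_erase, Finset.mem_univ, and_true] at hu ⊢
      exact mul_ne_zero hu (inv_ne_zero hee)
    · intro b _; field_simp
    · intro u _; field_simp
    · intro b _
      rw [mul_add]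
  have hsecond : (∏ b ∈ N, (X - C (-(b * e) + b * e))) = X ^ (p - 1) := by
    rw [← hcardN, ← Finset.prod_const]
    apply Finset.prod_congr rfl
    intro b _
    simp
  rw [hfirst, hsecond]
  ring

lemma prod_S (p : ℕ) [Fact p.Prime] (hodd : Odd p) (d : ℤ) (e : ZMod p)
    (he : e ^ 2 = (d : ZMod p)) (he0 : e ≠ 0) :
    (∏ mn ∈ (Finset.Icc (1 : ℤ) ((p : ℤ) - 1) ×ˢ Finset.Icc (1 : ℤ) ((p : ℤ) - 1)).filter
        (fun mn => (p : ℤ) ∣ (mn.1 ^ 2 - d * mn.2 ^ 2)),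
      (X - C ((mn.1 : ZMod p) + (mn.2 : ZMod p) * e)))
    = X ^ (p - 1) * (X ^ (p - 1) - 1) := by
  have hp1 : 1 < p := (Fact.out : p.Prime).one_lt
  have hmem : ∀ m : ℤ, m ∈ Finset.Icc (1 : ℤ) ((p : ℤ) - 1) →
      (m : ZMod p) ≠ 0 ∧ (((m : ZMod p).val : ℤ)) = m := by
    intro m hm
    rw [Finset.mem_Icc] at hm
    constructor
    · rw [Ne, ZMod.intCast_zmod_eq_zero_iff_dvd]
      intro hdvd
      have := Int.le_of_dvd (by omega) hdvd
      omega
    · rw [ZMod.val_intCast]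
      exact Int.emod_eq_of_lt (by omega) (by omega)
  have hmem2 : ∀ a : ZMod p, a ≠ 0 → ((a.val : ℤ) ∈ Finset.Icc (1 : ℤ) ((p : ℤ) - 1)
      ∧ ((a.val : ℤ) : ZMod p) = a) := by
    intro a ha
    have hv0 : a.val ≠ 0 := fun h => ha ((ZMod.val_eq_zero a).mp h)
    have hvlt : a.val < p := ZMod.val_lt a
    constructor
    · rw [Finset.mem_Icc]; omega
    · push_cast
      simp [ZMod.natCast_val, ZMod.cast_id]
  have hcond : ∀ m n : ℤ, ((p : ℤ) ∣ (m ^ 2 - d * n ^ 2)) ↔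
      ((m : ZMod p) ^ 2 = (d : ZMod p) * (n : ZMod p) ^ 2) := by
    intro m n
    rw [← ZMod.intCast_zmod_eq_zero_iff_dvd, ← sub_eq_zero (b := (d : ZMod p) * _)]
    push_cast
    rfl
  rw [← prod_T p hodd d e he he0]
  apply Finset.prod_nbij' (fun mn => ((mn.1 : ZMod p), (mn.2 : ZMod p)))
    (fun ab => ((ab.1.val : ℤ), (ab.2.val : ℤ)))
  · rintro ⟨m, n⟩ hmn
    simp only [Finset.mem_filter, Finset.mem_product] at hmn ⊢
    obtain ⟨⟨hm, hn⟩, hdvd⟩ := hmn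
    refine ⟨⟨?_, ?_⟩, ?_⟩
    · simp only [Finset.mem_erase, Finset.mem_univ, and_true]
      exact (hmem m hm).1
    · simp only [Finset.mem_erase, Finset.mem_univ, and_true]
      exact (hmem n hn).1
    · exact (hcond m n).mp hdvd
  · rintro ⟨a, b⟩ hab
    simp only [Finset.mem_filter, Finset.mem_product, Finset.mem_erase, Finset.mem_univ,
      and_true] at hab ⊢
    obtain ⟨⟨ha, hb⟩, heq⟩ := hab
    refine ⟨⟨(hmem2 a ha).1, (hmem2 b hb).1⟩, ?_⟩
    rw [hcond, (hmem2 a ha).2, (hmem2 b hb).2]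
    exact heq
  · rintro ⟨m, n⟩ hmn
    simp only [Finset.mem_filter, Finset.mem_product] at hmn
    obtain ⟨⟨hm, hn⟩, -⟩ := hmn
    simp only [Prod.mk.injEq]
    exact ⟨(hmem m hm).2, (hmem n hn).2⟩
  · rintro ⟨a, b⟩ hab
    simp only [Finset.mem_filter, Finset.mem_product, Finset.mem_erase, Finset.mem_univ,
      and_true] at hab
    obtain ⟨⟨ha, hb⟩, -⟩ := hab
    simp only [Prod.mk.injEq]
    exact ⟨(hmem2 a ha).2, (hmem2 b hb).2⟩
  · rintro ⟨m, n⟩ _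
    rfl

theorem stmt_6 (p : ℕ) [Fact p.Prime] (hodd : Odd p) (d : ℤ) (hd : ¬ (p : ℤ) ∣ d)
    (hleg : legendreSym p d = 1) :
    (p : (Zsqrtd d)[X]) ∣
      (∏ mn ∈ (Finset.Icc (1 : ℤ) ((p : ℤ) - 1) ×ˢ Finset.Icc (1 : ℤ) ((p : ℤ) - 1)).filter
          (fun mn => (p : ℤ) ∣ (mn.1 ^ 2 - d * mn.2 ^ 2)),
        (X - C (⟨mn.1, mn.2⟩ : Zsqrtd d)))
      - X ^ (p - 1) * (X ^ (p - 1) - 1) := by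
  have hd0 : ((d : ZMod p)) ≠ 0 := by
    rw [Ne, ZMod.intCast_zmod_eq_zero_iff_dvd]; exact hd
  obtain ⟨c, hc⟩ := (legendreSym.eq_one_iff p hd0).mp hleg
  have hc2 : c ^ 2 = (d : ZMod p) := by rw [sq, ← hc]
  have hc0 : c ≠ 0 := by
    intro h
    rw [h, zero_pow (two_ne_zero)] at hc2
    exact hd0 hc2.symm
  have h2 : (2 : ZMod p) ≠ 0 := zmodTwoNeZero p hodd
  have key : ∀ (φ : Zsqrtd d →+* ZMod p) (e : ZMod p), e ^ 2 = (d : ZMod p) → e ≠ 0 →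
      (∀ z : Zsqrtd d, φ z = (z.re : ZMod p) + (z.im : ZMod p) * e) →
      Polynomial.map φ
        ((∏ mn ∈ (Finset.Icc (1 : ℤ) ((p : ℤ) - 1) ×ˢ Finset.Icc (1 : ℤ) ((p : ℤ) - 1)).filter
            (fun mn => (p : ℤ) ∣ (mn.1 ^ 2 - d * mn.2 ^ 2)),
          (X - C (⟨mn.1, mn.2⟩ : Zsqrtd d)))
        - X ^ (p - 1) * (X ^ (p - 1) - 1)) = 0 := by
    intro φ e he he0 hφ
    rw [Polynomial.map_sub, Polynomial.map_mul, Polynomial.map_pow,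
      Polynomial.map_sub, Polynomial.map_pow, Polynomial.map_one, Polynomial.map_X,
      Polynomial.map_prod]
    simp only [Polynomial.map_sub, Polynomial.map_X, Polynomial.map_C, hφ]
    rw [sub_eq_zero]
    exact prod_S p hodd d e he he0
  have hcc : c * c = ((d : ℤ) : ZMod p) := by rw [← sq]; exact_mod_cast hc2
  have hcc' : (-c) * (-c) = ((d : ℤ) : ZMod p) := by rw [neg_mul_neg]; exact hcc
  set φ₁ : Zsqrtd d →+* ZMod p := Zsqrtd.lift ⟨c, hcc⟩ with hφ₁def
  set φ₂ : Zsqrtd d →+* ZMod p := Zsqrtd.lift ⟨-c, hcc'⟩ with hφ₂def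
  have hφ₁ : ∀ z : Zsqrtd d, φ₁ z = (z.re : ZMod p) + (z.im : ZMod p) * c := by
    intro z; simp [hφ₁def, Zsqrtd.lift_apply_apply]
  have hφ₂ : ∀ z : Zsqrtd d, φ₂ z = (z.re : ZMod p) + (z.im : ZMod p) * (-c) := by
    intro z; simp [hφ₂def, Zsqrtd.lift_apply_apply]
  have hmap1 := key φ₁ c hc2 hc0 hφ₁
  have hmap2 := key φ₂ (-c) (by rw [neg_pow, Even.neg_one_pow even_two, one_mul]; exact hc2) (neg_ne_zero.mpr hc0) hφ₂
  rw [← Polynomial.C_eq_natCast, Polynomial.C_dvd_iff_dvd_coeff]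
  intro i
  have h1 := congrArg (fun g => Polynomial.coeff g i) hmap1
  have h2' := congrArg (fun g => Polynomial.coeff g i) hmap2
  simp only [Polynomial.coeff_map, Polynomial.coeff_zero] at h1 h2'
  rw [hφ₁] at h1
  rw [hφ₂] at h2'
  set z := Polynomial.coeff
    ((∏ mn ∈ (Finset.Icc (1 : ℤ) ((p : ℤ) - 1) ×ˢ Finset.Icc (1 : ℤ) ((p : ℤ) - 1)).filter
        (fun mn => (p : ℤ) ∣ (mn.1 ^ 2 - d * mn.2 ^ 2)),
      (X - C (⟨mn.1, mn.2⟩ : Zsqrtd d)))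
    - X ^ (p - 1) * (X ^ (p - 1) - 1)) i with hzdef
  have hre : ((z.re : ZMod p)) = 0 := by
    have hx : (z.re : ZMod p) * 2 = 0 := by linear_combination h1 + h2'
    exact (mul_eq_zero.mp hx).resolve_right h2
  have him : ((z.im : ZMod p)) = 0 := by
    have hx : ((z.im : ZMod p) * c) * 2 = 0 := by linear_combination h1 - h2'
    have := (mul_eq_zero.mp hx).resolve_right h2
    exact (mul_eq_zero.mp this).resolve_right hc0
  rw [ZMod.intCast_zmod_eq_zero_iff_dvd] at hre him
  have hdvd : ((p : ℤ) : Zsqrtd d) ∣ z := (Zsqrtd.intCast_dvd _ _).mpr ⟨hre, him⟩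
  exact_mod_cast hdvd
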